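/- Let K be a field of characteristic p > 0, let U and V be nonzero finite-dimensional K-vector spaces, and let g, h be K-linear automorphisms of U, V respectively with g^p = 1 and h^p = 1. For such an automorphism u of a space M, let k_M(u) denote the least positive integer k with (u - 1)^k = 0 on M (the degree of the minimal polynomial of u, equal to the maximal size of a Jordan block of u). Then k_{U \otimes V}(g \otimes h) = min(p, k_U(g) + k_V(h) - 1). -/

import Mathlib

open LinearMap TensorProduct

/-- For a unipotent automorphism `f` of order dividing the characteristic, the degree of
its minimal polynomial: the least positive `k` with `(f - 1)^k = 0`, equal to the maximal
size of a Jordan block of `f`. -/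
noncomputable def unipotentIndex {K M : Type*} [Field K] [AddCommGroup M] [Module K M]
    (f : Module.End K M) : ℕ :=
  sInf {k : ℕ | 0 < k ∧ (f - 1) ^ k = 0}

open Finset in
lemma tensor_expand {K U V : Type*} [Field K] [AddCommGroup U] [Module K U]
    [AddCommGroup V] [Module K V] (g : Module.End K U) (h : Module.End K V) (n : ℕ) :
    ((TensorProduct.map (g : U →ₗ[K] U) (h : V →ₗ[K] V) : Module.End K (U ⊗[K] V)) - 1) ^ n
      = ∑ k ∈ range (n + 1),
          TensorProduct.map ((g - 1) ^ k : Module.End K U)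
            ((h ^ k * (h - 1) ^ (n - k)) : Module.End K V) * (n.choose k : Module.End K (U ⊗[K] V)) := by
  have hN : (TensorProduct.map (g : U →ₗ[K] U) (h : V →ₗ[K] V) : Module.End K (U ⊗[K] V)) - 1
      = TensorProduct.map ((g - 1 : Module.End K U) : U →ₗ[K] U) (h : V →ₗ[K] V)
        + TensorProduct.map (1 : U →ₗ[K] U) ((h - 1 : Module.End K V) : V →ₗ[K] V) := by
    have h1 : TensorProduct.map (g : U →ₗ[K] U) (h : V →ₗ[K] V)
        = TensorProduct.map ((g - 1 : Module.End K U) : U →ₗ[K] U) (h : V →ₗ[K] V)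
          + TensorProduct.map (1 : U →ₗ[K] U) (h : V →ₗ[K] V) := by
      rw [← TensorProduct.map_add_left]; congr 1; abel
    have h2 : TensorProduct.map (1 : U →ₗ[K] U) (h : V →ₗ[K] V)
        = TensorProduct.map (1 : U →ₗ[K] U) ((h - 1 : Module.End K V) : V →ₗ[K] V)
          + (1 : Module.End K (U ⊗[K] V)) := by
      rw [show (1 : Module.End K (U ⊗[K] V)) = TensorProduct.map 1 1 from (TensorProduct.map_one).symm,
        ← TensorProduct.map_add_right]; congr 1; abel
    rw [h1, h2]; abel
  have hc : Commute
      (TensorProduct.map ((g - 1 : Module.End K U) : U →ₗ[K] U) (h : V →ₗ[K] V))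
      (TensorProduct.map (1 : U →ₗ[K] U) ((h - 1 : Module.End K V) : V →ₗ[K] V)) := by
    show _ * _ = _ * _
    rw [← TensorProduct.map_mul, ← TensorProduct.map_mul]
    congr 1
    rw [mul_sub, sub_mul, mul_one, one_mul]
  rw [hN, hc.add_pow]
  refine Finset.sum_congr rfl fun k hk => ?_
  rw [TensorProduct.map_pow, TensorProduct.map_pow, ← TensorProduct.map_mul]
  congr 2 <;> simp [mul_one, one_pow]
lemma unipotentIndex_spec {K M : Type*} [Field K] [AddCommGroup M] [Module K M]
    [Nontrivial M] {p : ℕ} (hp : 0 < p) [CharP K p] (f : Module.End K M) (hf : f ^ p = 1) :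
    0 < unipotentIndex f ∧ (f - 1) ^ unipotentIndex f = 0 ∧ unipotentIndex f ≤ p ∧
      (f - 1) ^ (unipotentIndex f - 1) ≠ 0 := by
  haveI : Fact p.Prime :=
    ⟨(CharP.char_is_prime_or_zero K p).resolve_right hp.ne'⟩
  haveI : CharP (Module.End K M) p := charP_of_injective_algebraMap' (A := Module.End K M) K p
  have hpmem : p ∈ {k : ℕ | 0 < k ∧ (f - 1) ^ k = 0} := by
    refine ⟨hp, ?_⟩
    rw [sub_pow_char_of_commute p (Commute.one_right f), hf, one_pow, sub_self]
  simp only [unipotentIndex]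
  have hmem := Nat.sInf_mem (⟨p, hpmem⟩ : Set.Nonempty {k : ℕ | 0 < k ∧ (f - 1) ^ k = 0})
  refine ⟨hmem.1, hmem.2, Nat.sInf_le hpmem, fun hzero => ?_⟩
  rcases Nat.eq_or_lt_of_le hmem.1 with h1 | h1
  · rw [← h1] at hzero
    simp only [Nat.sub_self, pow_zero] at hzero
    exact one_ne_zero hzero
  · have hmem2 : sInf {k : ℕ | 0 < k ∧ (f - 1) ^ k = 0} - 1
        ∈ {k : ℕ | 0 < k ∧ (f - 1) ^ k = 0} := ⟨by omega, hzero⟩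
    have := Nat.sInf_le hmem2
    omega

/-- For automorphisms `g`, `h` of order dividing `p` of nonzero finite-dimensional spaces
`U`, `V` over a field of characteristic `p > 0`, the maximal Jordan block size of
`g ⊗ h` equals `min p (k_U(g) + k_V(h) - 1)`. -/
theorem unipotentIndex_tensor
    {K U V : Type*} [Field K] [AddCommGroup U] [Module K U] [AddCommGroup V] [Module K V]
    [FiniteDimensional K U] [FiniteDimensional K V] [Nontrivial U] [Nontrivial V]
    (p : ℕ) (hp : 0 < p) [CharP K p]
    (g : Module.End K U) (hg : g ^ p = 1)
    (h : Module.End K V) (hh : h ^ p = 1) :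
    unipotentIndex
        ((TensorProduct.map (g : U →ₗ[K] U) (h : V →ₗ[K] V)) : Module.End K (U ⊗[K] V))
      = min p (unipotentIndex g + unipotentIndex h - 1) := by
  classical
  haveI hPp : Fact p.Prime :=
    ⟨(CharP.char_is_prime_or_zero K p).resolve_right hp.ne'⟩
  obtain ⟨ha0, hAa, hap, hAa'⟩ := unipotentIndex_spec hp g hg
  obtain ⟨hb0, hBb, hbp, hBb'⟩ := unipotentIndex_spec hp h hh
  set a := unipotentIndex g with hadef
  set b := unipotentIndex h with hbdef
  set m := min p (a + b - 1) with hm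
  set N : Module.End K (U ⊗[K] V) :=
    (TensorProduct.map (g : U →ₗ[K] U) (h : V →ₗ[K] V)) - 1 with hNdef
  -- upper bound : N ^ m = 0
  have hNm : N ^ m = 0 := by
    rw [hNdef, tensor_expand]
    apply Finset.sum_eq_zero
    intro k hk
    rw [Finset.mem_range] at hk
    by_cases hka : a ≤ k
    · have hz : ((g : Module.End K U) - 1) ^ k = 0 := by
        rw [show k = (k - a) + a by omega, pow_add, hAa, mul_zero]
      rw [hz, TensorProduct.map_zero_left, zero_mul]
    · by_cases hkb : b ≤ m - k
      · have hz : ((h : Module.End K V) - 1) ^ (m - k) = 0 := by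
          rw [show m - k = (m - k - b) + b by omega, pow_add, hBb, mul_zero]
        rw [hz, mul_zero, TensorProduct.map_zero_right, zero_mul]
      · have hmp' : m = p := by omega
        have hchoose : ((m.choose k : ℕ) : Module.End K (U ⊗[K] V)) = 0 := by
          rw [← map_natCast (algebraMap K (Module.End K (U ⊗[K] V))) (m.choose k),
            (CharP.cast_eq_zero_iff K p _).2 (by
              rw [hmp']
              exact Nat.Prime.dvd_choose_self hPp.out (by omega) (by omega)),
            map_zero]
        rw [hchoose, mul_zero]
  have hm0 : 0 < m := by omega
  have ham : a ≤ m := by omega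
  set n := m - 1 with hn
  -- pick witnesses
  obtain ⟨u, hu⟩ : ∃ u : U, (((g : Module.End K U) - 1) ^ (a - 1)) u ≠ 0 := by
    by_contra h'
    push_neg at h'
    exact hAa' (LinearMap.ext fun x => h' x)
  obtain ⟨v, hv⟩ : ∃ v : V, (((h : Module.End K V) - 1) ^ (b - 1)) v ≠ 0 := by
    by_contra h'
    push_neg at h'
    exact hBb' (LinearMap.ext fun x => h' x)
  -- commutation helper
  have hcomm : ∀ s t s' t' : ℕ,
      (h ^ s * (h - 1) ^ t) * (h ^ s' * (h - 1) ^ t')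
        = h ^ (s + s') * (h - 1) ^ (t + t') := by
    intro s t s' t'
    have hc : Commute ((h - 1) ^ t) (h ^ s') :=
      (((Commute.refl h).sub_right (Commute.one_right h)).symm).pow_pow t s'
    rw [mul_assoc, ← mul_assoc ((h - 1) ^ t), hc.eq, mul_assoc, ← mul_assoc, ← pow_add,
      ← pow_add]
  -- the distinguished vector and the functional
  set w : V := (h ^ (a - 1) * (h - 1) ^ (m - a)) v with hwdef
  have hwmem : w ∉ LinearMap.range (((h : Module.End K V) - 1) ^ (m - a + 1) : Module.End K V) := by
    rintro ⟨z, hz⟩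
    set E : Module.End K V := h ^ ((p - 1) * (a - 1)) * (h - 1) ^ (b - 1 - (m - a)) with hE
    have hpa : (p - 1) * (a - 1) + (a - 1) = p * (a - 1) := by
      conv_rhs => rw [← Nat.succ_pred_eq_of_pos hp]
      rw [Nat.succ_mul]
      rfl
    have e1 : E * (h ^ (a - 1) * (h - 1) ^ (m - a)) = (h - 1) ^ (b - 1) := by
      rw [hE, hcomm, hpa, show b - 1 - (m - a) + (m - a) = b - 1 by omega,
        pow_mul, hh, one_pow, one_mul]
    have e2 : E * ((h - 1) ^ (m - a + 1)) = 0 := by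
      have := hcomm ((p - 1) * (a - 1)) (b - 1 - (m - a)) 0 (m - a + 1)
      rw [pow_zero, one_mul] at this
      rw [hE, this, show b - 1 - (m - a) + (m - a + 1) = b by omega, hBb, mul_zero]
    have : (((h : Module.End K V) - 1) ^ (b - 1)) v = 0 := by
      calc (((h : Module.End K V) - 1) ^ (b - 1)) v
          = (E * (h ^ (a - 1) * (h - 1) ^ (m - a))) v := by rw [e1]
        _ = E w := by rw [Module.End.mul_apply, hwdef]
        _ = E (((h - 1) ^ (m - a + 1) : Module.End K V) z) := by rw [hz]
        _ = (E * ((h - 1) ^ (m - a + 1))) z := rfl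
        _ = 0 := by rw [e2]; rfl
    exact hv this
  obtain ⟨ψ, hψw, hψker⟩ :=
    Submodule.exists_dual_map_eq_bot_of_notMem hwmem inferInstance
  have hψ0 : ∀ y ∈ LinearMap.range (((h : Module.End K V) - 1) ^ (m - a + 1) : Module.End K V),
      ψ y = 0 := by
    intro y hy
    have : ψ y ∈ Submodule.map ψ (LinearMap.range (((h : Module.End K V) - 1) ^ (m - a + 1) : Module.End K V)) :=
      Submodule.mem_map_of_mem hy
    rw [hψker] at this
    exact (Submodule.mem_bot K).1 this
  -- the evaluation map
  set G : (U ⊗[K] V) →ₗ[K] U :=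
    (TensorProduct.rid K U).toLinearMap ∘ₗ TensorProduct.map (LinearMap.id) ψ with hGdef
  have hG : ∀ (x : U) (y : V), G (x ⊗ₜ[K] y) = ψ y • x := by
    intro x y
    simp [hGdef, TensorProduct.rid_tmul]
  -- lower bound: N ^ n ≠ 0
  have hchoose_ne : ((n.choose (a - 1) : ℕ) : K) ≠ 0 := by
    intro h0
    have hdvd : p ∣ n.choose (a - 1) := (CharP.cast_eq_zero_iff K p _).1 h0
    have hfac : n.choose (a - 1) * Nat.factorial (a - 1) * Nat.factorial (n - (a - 1)) = Nat.factorial n :=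
      Nat.choose_mul_factorial_mul_factorial (by omega)
    have : p ∣ Nat.factorial n := hfac ▸ Dvd.dvd.mul_right (hdvd.mul_right _) _
    have := (Nat.Prime.dvd_factorial hPp.out).1 this
    omega
  have hNn : N ^ n ≠ 0 := by
    intro h0
    have hterm : ∀ k : ℕ,
        ((TensorProduct.map (((g : Module.End K U) - 1) ^ k : Module.End K U)
            ((h ^ k * (h - 1) ^ (n - k)) : Module.End K V)
          * ((n.choose k : ℕ) : Module.End K (U ⊗[K] V))) (u ⊗ₜ[K] v))
        = (n.choose k) • ((((g : Module.End K U) - 1) ^ k) u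
            ⊗ₜ[K] ((h ^ k * (h - 1) ^ (n - k)) v)) := by
      intro k
      rw [Module.End.mul_apply, Module.End.natCast_apply, map_nsmul, TensorProduct.map_tmul]
    have hval : G ((N ^ n) (u ⊗ₜ[K] v))
        = (n.choose (a - 1)) • (ψ w • (((g : Module.End K U) - 1) ^ (a - 1)) u) := by
      rw [hNdef, tensor_expand, LinearMap.sum_apply, map_sum]
      rw [Finset.sum_eq_single_of_mem (a - 1) (Finset.mem_range.2 (by omega))]
      · rw [hterm, map_nsmul, hG, show n - (a - 1) = m - a by omega, ← hwdef]
      · intro k hk hne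
        rw [Finset.mem_range] at hk
        rw [hterm, map_nsmul, hG]
        by_cases hka : a ≤ k
        · have hz : (((g : Module.End K U) - 1) ^ k) u = 0 := by
            rw [show k = (k - a) + a by omega, pow_add, Module.End.mul_apply, hAa]
            simp
          rw [hz, smul_zero, smul_zero]
        · have hkle : k ≤ a - 2 := by omega
          have hmem : ((h ^ k * (h - 1) ^ (n - k)) v)
              ∈ LinearMap.range (((h : Module.End K V) - 1) ^ (m - a + 1) : Module.End K V) := by
            refine ⟨(h ^ k * (h - 1) ^ (n - k - (m - a + 1))) v, ?_⟩
            rw [← Module.End.mul_apply]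
            congr 1
            have := hcomm 0 (m - a + 1) k (n - k - (m - a + 1))
            rw [pow_zero, one_mul, zero_add] at this
            rw [this, show m - a + 1 + (n - k - (m - a + 1)) = n - k by omega]
          rw [hψ0 _ hmem, zero_smul, smul_zero]
    rw [h0] at hval
    simp only [LinearMap.zero_apply, map_zero] at hval
    have hne : (n.choose (a - 1)) • (ψ w • (((g : Module.End K U) - 1) ^ (a - 1)) u) ≠ 0 := by
      rw [← Nat.cast_smul_eq_nsmul K]
      exact smul_ne_zero hchoose_ne (smul_ne_zero hψw hu)
    exact hne hval.symm
  refine le_antisymm (Nat.sInf_le ⟨hm0, ?_⟩) (le_csInf ⟨m, hm0, ?_⟩ fun k hk => ?_)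
  · exact hNm
  · exact hNm
  · by_contra hlt
    push_neg at hlt
    refine hNn ?_
    rw [show n = (n - k) + k by omega, pow_add, hk.2, mul_zero]
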